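/- arXiv:1402.6560 — 6 statements merged into one kernel-verified Lean document; each statement's English description precedes it below -/
import Mathlib

section
/- Counterexample to Pouly–Kohlas Theorem 8.1: Let x, y be two binary variables and let φ : {0,1}×{0,1} → {0,1} be defined by φ(a,b) = 1 if a = b and 0 otherwise. With projection by maximization and solution/extension sets W_φ(x) = { y : φ(x,y) = φ^{↓X}(x) }, taking X = {x} and Y = {y}, the set c_φ^{↓X∪Y} = {(0,0),(1,1)} is a strict subset of the set { z ∈ Ω_{X∪Y} : z↓Y ∈ c_φ^{↓Y} and z↓(X−Y) ∈ W_{φ^{↓X}}(z↓(X∩Y)) }, which equals all of Ω_{X∪Y}; hence the two sets are not equal. -/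
open Classical

variable {V : Type*} [DecidableEq V]

/-- The set of configurations (tuples) over a finite set `S` of variables with frames `Ω`. -/
abbrev Cfg (Ω : V → Type*) (S : Finset V) := (v : {x // x ∈ S}) → Ω v.1

/-- Restriction (tuple projection) of a configuration to a subset of its domain. -/
def restrict {Ω : V → Type*} {S T : Finset V} (h : S ⊆ T) (x : Cfg Ω T) : Cfg Ω S :=
  fun v => x ⟨v.1, h v.2⟩

/-- Extend a configuration to a larger domain by arbitrary values. -/
noncomputable def extendCfg {Ω : V → Type*} [∀ v, Nonempty (Ω v)] {S T : Finset V}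
    (h : S ⊆ T) (x : Cfg Ω S) : Cfg Ω T :=
  fun v => if hv : v.1 ∈ S then x ⟨v.1, hv⟩ else Classical.arbitrary (Ω v.1)

theorem restrict_extendCfg {Ω : V → Type*} [∀ v, Nonempty (Ω v)] {S T : Finset V}
    (h : S ⊆ T) (x : Cfg Ω S) : restrict h (extendCfg h x) = x := by
  funext v; simp [restrict, extendCfg, v.2]

/-- Projection by maximization: `φ^{↓X}(x) = max { φ(z) : z ∈ Ω_D, z↓X = x }`. -/
noncomputable def projv {Ω : V → Type*} [∀ v, Fintype (Ω v)] [∀ v, Nonempty (Ω v)]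
    [∀ v, DecidableEq (Ω v)] {X D : Finset V} (φ : Cfg Ω D → ℝ) (h : X ⊆ D)
    (x : Cfg Ω X) : ℝ :=
  (Finset.univ.filter fun z : Cfg Ω D => restrict h z = x).sup'
    ⟨extendCfg h x, Finset.mem_filter.mpr ⟨Finset.mem_univ _, restrict_extendCfg h x⟩⟩ φ

/-- The empty configuration `⋄`. -/
def emptyCfg {V : Type*} [DecidableEq V] {Ω : V → Type*} : Cfg Ω (∅ : Finset V) :=
  fun v => absurd v.2 (Finset.notMem_empty v.1)

/-- The two binary variables: `X = {x}`, `Y = {y}`. -/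
def Xc : Finset (Fin 2) := {0}
def Yc : Finset (Fin 2) := {1}

theorem h0mem : (0 : Fin 2) ∈ Xc ∪ Yc := by decide
theorem h1mem : (1 : Fin 2) ∈ Xc ∪ Yc := by decide

/-- The valuation `φ(a,b) = 1` iff `a = b`, as a Boolean ({0,1}-valued) function. -/
noncomputable def φc : Cfg (fun _ : Fin 2 => Bool) (Xc ∪ Yc) → ℝ :=
  fun z => if z ⟨0, h0mem⟩ = z ⟨1, h1mem⟩ then 1 else 0

/-- The solution set `c_φ = W_φ(⋄)`: the set of global maximizers of `φ`. -/
noncomputable def cφc : Set (Cfg (fun _ : Fin 2 => Bool) (Xc ∪ Yc)) :=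
  {z | φc z = projv φc (Finset.empty_subset _) emptyCfg}

/-- The left-hand side of equation (8.1): `c_φ^{↓X∪Y}`. -/
noncomputable def lhsSet : Set (Cfg (fun _ : Fin 2 => Bool) (Xc ∪ Yc)) :=
  restrict (Finset.Subset.refl (Xc ∪ Yc)) '' cφc

/-- The right-hand side of equation (8.1):
`{ z : z↓Y ∈ c_φ^{↓Y} and z↓(X−Y) ∈ W_{φ^{↓X}}(z↓(X∩Y)) }`, where the second
condition is expressed equivalently as `φ^{↓X}(z↓X) = (φ^{↓X})^{↓X∩Y}(z↓(X∩Y))`. -/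
noncomputable def rhsSet : Set (Cfg (fun _ : Fin 2 => Bool) (Xc ∪ Yc)) :=
  {z | restrict Finset.subset_union_right z
          ∈ restrict (Finset.subset_union_right : Yc ⊆ Xc ∪ Yc) '' cφc
    ∧ projv φc Finset.subset_union_left (restrict Finset.subset_union_left z)
        = projv (projv φc (Finset.subset_union_left : Xc ⊆ Xc ∪ Yc))
            (Finset.inter_subset_left : Xc ∩ Yc ⊆ Xc)
            (restrict ((Finset.inter_subset_left).trans Finset.subset_union_left) z)}

lemma phic_le_one (z : Cfg (fun _ : Fin 2 => Bool) (Xc ∪ Yc)) : φc z ≤ 1 := by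
  unfold φc; split <;> norm_num

lemma phic_eq_one_iff (z : Cfg (fun _ : Fin 2 => Bool) (Xc ∪ Yc)) :
    φc z = 1 ↔ z ⟨0, h0mem⟩ = z ⟨1, h1mem⟩ := by
  unfold φc; split <;> simp_all

lemma phic_const (b : Bool) : φc (fun _ => b) = 1 := by
  rw [phic_eq_one_iff]

lemma projv_empty_eq_one :
    projv φc (Finset.empty_subset (Xc ∪ Yc)) emptyCfg = 1 := by
  apply le_antisymm
  · exact Finset.sup'_le _ _ fun z _ => phic_le_one z
  · have hmem : (fun _ => true : Cfg (fun _ : Fin 2 => Bool) (Xc ∪ Yc)) ∈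
        Finset.univ.filter fun z : Cfg (fun _ : Fin 2 => Bool) (Xc ∪ Yc) =>
          restrict (Finset.empty_subset (Xc ∪ Yc)) z = emptyCfg := by
      refine Finset.mem_filter.mpr ⟨Finset.mem_univ _, ?_⟩
      funext v; exact absurd v.2 (Finset.notMem_empty v.1)
    calc (1:ℝ) = φc (fun _ => true) := (phic_const true).symm
    _ ≤ _ := Finset.le_sup' φc hmem

lemma mem_cphic (z : Cfg (fun _ : Fin 2 => Bool) (Xc ∪ Yc)) :
    z ∈ cφc ↔ z ⟨0, h0mem⟩ = z ⟨1, h1mem⟩ := by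
  rw [cφc, Set.mem_setOf_eq, projv_empty_eq_one, phic_eq_one_iff]

lemma projv_X_eq_one (x : Cfg (fun _ : Fin 2 => Bool) Xc) :
    projv φc (Finset.subset_union_left : Xc ⊆ Xc ∪ Yc) x = 1 := by
  apply le_antisymm
  · exact Finset.sup'_le _ _ fun z _ => phic_le_one z
  · set z : Cfg (fun _ : Fin 2 => Bool) (Xc ∪ Yc) := fun _ => x ⟨0, by decide⟩ with hz
    have hmem : z ∈ Finset.univ.filter fun w : Cfg (fun _ : Fin 2 => Bool) (Xc ∪ Yc) =>
        restrict (Finset.subset_union_left : Xc ⊆ Xc ∪ Yc) w = x := by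
      refine Finset.mem_filter.mpr ⟨Finset.mem_univ _, ?_⟩
      funext v
      obtain ⟨a, ha⟩ := v
      have : a = 0 := by simpa [Xc] using ha
      subst this; rfl
    calc (1:ℝ) = φc z := ((phic_eq_one_iff z).mpr rfl).symm
    _ ≤ _ := Finset.le_sup' φc hmem

lemma projv_proj_eq_one (x : Cfg (fun _ : Fin 2 => Bool) (Xc ∩ Yc)) :
    projv (projv φc (Finset.subset_union_left : Xc ⊆ Xc ∪ Yc))
      (Finset.inter_subset_left : Xc ∩ Yc ⊆ Xc) x = 1 := by
  apply le_antisymm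
  · exact Finset.sup'_le _ _ fun w _ => le_of_eq (projv_X_eq_one w)
  · have hmem : extendCfg (Finset.inter_subset_left : Xc ∩ Yc ⊆ Xc) x ∈
        Finset.univ.filter fun w : Cfg (fun _ : Fin 2 => Bool) Xc =>
          restrict (Finset.inter_subset_left : Xc ∩ Yc ⊆ Xc) w = x :=
      Finset.mem_filter.mpr ⟨Finset.mem_univ _, restrict_extendCfg _ x⟩
    exact le_trans (le_of_eq (projv_X_eq_one (extendCfg Finset.inter_subset_left x)).symm)
      (Finset.le_sup' _ hmem)

/-- counterexample to Pouly–Kohlas Theorem 8.1.  For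
`φ(a,b) = [a=b]`, `X = {x}`, `Y = {y}`: the set `c_φ^{↓X∪Y}` equals
`{(0,0),(1,1)}` (tuples with equal coordinates), the right-hand side set equals
all of `Ω_{X∪Y}`, and hence the two sets are not equal. -/
theorem counterexample_thm_8_1 :
    lhsSet = {z : Cfg (fun _ : Fin 2 => Bool) (Xc ∪ Yc) | z ⟨0, h0mem⟩ = z ⟨1, h1mem⟩}
    ∧ rhsSet = Set.univ
    ∧ lhsSet ≠ rhsSet := by
  have hlhs : lhsSet = {z : Cfg (fun _ : Fin 2 => Bool) (Xc ∪ Yc) |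
      z ⟨0, h0mem⟩ = z ⟨1, h1mem⟩} := by
    ext z
    constructor
    · rintro ⟨w, hw, rfl⟩
      exact (mem_cphic w).mp hw
    · intro hz
      exact ⟨z, (mem_cphic z).mpr hz, rfl⟩
  have hrhs : rhsSet = Set.univ := by
    ext z
    simp only [Set.mem_univ, iff_true]
    constructor
    · refine ⟨fun _ => z ⟨1, h1mem⟩, (mem_cphic _).mpr rfl, ?_⟩
      funext v
      obtain ⟨a, ha⟩ := v
      have : a = 1 := by simpa [Yc] using ha
      subst this; rfl
    · rw [projv_X_eq_one, projv_proj_eq_one]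
  refine ⟨hlhs, hrhs, ?_⟩
  rw [hlhs, hrhs]
  intro h
  have : (fun v => decide (v.1 = 1) : Cfg (fun _ : Fin 2 => Bool) (Xc ∪ Yc)) ∈
      {z : Cfg (fun _ : Fin 2 => Bool) (Xc ∪ Yc) | z ⟨0, h0mem⟩ = z ⟨1, h1mem⟩} := by
    rw [h]; trivial
  simp at this
end

section
/- Piecewise extensibility extends to finite products: let ℰ be a piecewise extensible family of configuration extension sets over a valuation algebra with configuration system. Let φ₁,…,φ_m be valuations with domains d₁,…,d_m, φ = ∏ᵢ φᵢ, rᵢ = dᵢ ∧ (⋁_{j≠i} d_j), and t ∈ D with ⋁ᵢ dᵢ ≥ t ≥ ⋁ᵢ rᵢ. If x ∈ Γ_t and z is an extension of x to each φᵢ (i.e., z_{dᵢ} ∈ E_{φᵢ}(x_{t∧dᵢ}) for all i), then z is an extension of x to φ (z ∈ E_φ(x)). -/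
/-- A valuation algebra over a lattice `D` (axioms A1–A6). -/
structure ValuationAlgebra (Φ : Type*) (D : Type*) [Lattice D] [OrderBot D] where
  dom : Φ → D
  comb : Φ → Φ → Φ
  proj : Φ → D → Φ
  /-- A1: commutativity. -/
  comb_comm : ∀ φ ψ, comb φ ψ = comb ψ φ
  /-- A1: associativity. -/
  comb_assoc : ∀ φ ψ χ, comb (comb φ ψ) χ = comb φ (comb ψ χ)
  /-- A2: labeling. -/
  dom_comb : ∀ φ ψ, dom (comb φ ψ) = dom φ ⊔ dom ψ
  /-- A3: projection. -/
  dom_proj : ∀ φ x, x ≤ dom φ → dom (proj φ x) = x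
  /-- A4: transitivity. -/
  proj_trans : ∀ φ x y, x ≤ y → y ≤ dom φ → proj (proj φ y) x = proj φ x
  /-- A5: combination. -/
  comb_proj : ∀ φ ψ z, dom φ ≤ z → z ≤ dom φ ⊔ dom ψ →
      proj (comb ψ φ) z = comb φ (proj ψ (z ⊓ dom ψ))
  /-- A6: domain. -/
  proj_dom : ∀ φ, proj φ (dom φ) = φ

/-- A configuration system over a lattice `D`: mutually exclusive configuration
sets `Γ s` with surjective, compatible projections, and `Γ ⊥ = {⋄}`. -/
structure ConfigSystem (D : Type*) [Lattice D] [OrderBot D] (Γ : D → Type*) where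
  cproj : ∀ {s t : D}, s ≤ t → Γ t → Γ s
  cproj_surj : ∀ {s t : D} (h : s ≤ t), Function.Surjective (cproj h)
  cproj_comp : ∀ {s t u : D} (h₁ : s ≤ t) (h₂ : t ≤ u) (x : Γ u),
      cproj h₁ (cproj h₂ x) = cproj (h₁.trans h₂) x
  cproj_refl : ∀ {s : D} (x : Γ s), cproj le_rfl x = x
  /-- The empty configuration `⋄`. -/
  diamond : Γ ⊥
  diamond_unique : ∀ x : Γ ⊥, x = diamond

/-- A family of configuration extension sets `E_φ(x) ⊆ Γ_{d(φ)}` for `x ∈ Γ_s`,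
`s ≤ d(φ)`, together with the solution concept `c`, satisfying conditions
(1)–(3): identity on the own scope, two-step decomposition through intermediate
scopes, and `c_φ = E_φ(⋄)`.  (The index `d` together with the proof
`VA.dom φ = d` is used to state the scope of the extension sets.) -/
structure ExtFamily {Φ D : Type*} [Lattice D] [OrderBot D] {Γ : D → Type*}
    (VA : ValuationAlgebra Φ D) (CS : ConfigSystem D Γ) where
  E : ∀ (φ : Φ) {s d : D}, VA.dom φ = d → s ≤ d → Γ s → Set (Γ d)
  sol : ∀ (φ : Φ) {d : D}, VA.dom φ = d → Set (Γ d)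
  self_ext : ∀ (φ : Φ) (d : D) (hd : VA.dom φ = d) (x : Γ d),
      E φ hd le_rfl x = {x}
  two_step : ∀ (φ : Φ) (d : D) (hd : VA.dom φ = d) (s t : D)
      (hst : s ≤ t) (_ : s ≠ t) (htd : t ≤ d) (x : Γ s),
      E φ hd (hst.trans htd) x
        = {y : Γ d | CS.cproj htd y
              ∈ E (VA.proj φ t) (VA.dom_proj φ t (htd.trans_eq hd.symm)) hst x
            ∧ y ∈ E φ hd htd (CS.cproj htd y)}
  sol_eq : ∀ (φ : Φ) (d : D) (hd : VA.dom φ = d),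
      sol φ hd = E φ hd bot_le CS.diamond

/-- A configuration system is merge-friendly when configurations agreeing on
the meet of their scopes admit a merger on the join of their scopes. -/
def ConfigSystem.MergeFriendly {D : Type*} [Lattice D] [OrderBot D] {Γ : D → Type*}
    (CS : ConfigSystem D Γ) : Prop :=
  ∀ (s t : D) (x : Γ s) (y : Γ t),
    CS.cproj inf_le_left x = CS.cproj inf_le_right y →
      ∃ z : Γ (s ⊔ t), CS.cproj le_sup_left z = x ∧ CS.cproj le_sup_right z = y

/-- Piecewise extensibility: a simultaneous extension of `x` to two valuations
is an extension of `x` to their combination. -/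
def ExtFamily.PiecewiseExtensible {Φ D : Type*} [Lattice D] [OrderBot D]
    {Γ : D → Type*} {VA : ValuationAlgebra Φ D} {CS : ConfigSystem D Γ}
    (F : ExtFamily VA CS) : Prop :=
  ∀ (φ₁ φ₂ : Φ) (d₁ d₂ : D) (h₁ : VA.dom φ₁ = d₁) (h₂ : VA.dom φ₂ = d₂)
    (t : D) (ht₁ : d₁ ⊓ d₂ ≤ t) (ht₂ : t ≤ d₁ ⊔ d₂)
    (x : Γ t) (z : Γ (d₁ ⊔ d₂)),
    CS.cproj le_sup_left z ∈ F.E φ₁ h₁ inf_le_right (CS.cproj inf_le_left x) →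
    CS.cproj le_sup_right z ∈ F.E φ₂ h₂ inf_le_right (CS.cproj inf_le_left x) →
    z ∈ F.E (VA.comb φ₁ φ₂)
          (show VA.dom (VA.comb φ₁ φ₂) = d₁ ⊔ d₂ by rw [VA.dom_comb, h₁, h₂])
          ht₂ x

/-- The combination `f 0 × f 1 × ⋯ × f n` of finitely many valuations. -/
def prodFin {Φ D : Type*} [Lattice D] [OrderBot D] (VA : ValuationAlgebra Φ D)
    {n : ℕ} (f : Fin (n + 1) → Φ) : Φ :=
  (List.ofFn fun i : Fin n => f i.succ).foldl VA.comb (f 0)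

section Aux

variable {Φ D : Type*} [Lattice D] [OrderBot D] {Γ : D → Type*}

lemma cproj_heq_self (CS : ConfigSystem D Γ) {s t : D} (e : s = t)
    (h : s ≤ t) (x : Γ t) : HEq (CS.cproj h x) x := by
  subst e; rw [CS.cproj_refl]

lemma cproj_cproj_heq (CS : ConfigSystem D Γ) {s s' t u : D} (e : s' = s)
    (h₁ : s ≤ t) (h₂ : t ≤ u) (h' : s' ≤ u) (x : Γ u) :
    HEq (CS.cproj h₁ (CS.cproj h₂ x)) (CS.cproj h' x) := by
  subst e; rw [CS.cproj_comp]

lemma E_mem_congr {VA : ValuationAlgebra Φ D} {CS : ConfigSystem D Γ}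
    (F : ExtFamily VA CS) {φ φ' : Φ} {s s' dd dd' : D}
    (eφ : φ = φ') (es : s = s') (ed : dd = dd')
    (hd : VA.dom φ = dd) (hd' : VA.dom φ' = dd')
    (h : s ≤ dd) (h' : s' ≤ dd')
    {x : Γ s} {x' : Γ s'} (hx : HEq x x')
    {y : Γ dd} {y' : Γ dd'} (hy : HEq y y')
    (hmem : y ∈ F.E φ hd h x) : y' ∈ F.E φ' hd' h' x' := by
  subst eφ; subst es; subst ed; cases hx; cases hy; exact hmem

lemma prodFin_succ (VA : ValuationAlgebra Φ D) {n : ℕ} (f : Fin (n + 2) → Φ) :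
    prodFin VA f
      = VA.comb (prodFin VA (fun i : Fin (n + 1) => f i.castSucc))
          (f (Fin.last (n + 1))) := by
  unfold prodFin
  rw [List.ofFn_succ']
  simp only [List.concat_eq_append, List.foldl_append, List.foldl_cons, List.foldl_nil]
  rw [Fin.succ_last]
  congr 2

lemma sup_univ_last {n : ℕ} (g : Fin (n + 2) → D) :
    Finset.univ.sup g
      = Finset.univ.sup (fun i : Fin (n + 1) => g i.castSucc)
          ⊔ g (Fin.last (n + 1)) := by
  apply le_antisymm
  · refine Finset.sup_le fun i _ => ?_
    rcases Fin.eq_castSucc_or_eq_last i with ⟨j, rfl⟩ | rfl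
    · exact le_sup_of_le_left
        (Finset.le_sup (f := fun i : Fin (n+1) => g i.castSucc) (Finset.mem_univ j))
    · exact le_sup_right
  · exact sup_le (Finset.sup_le fun j _ => Finset.le_sup (Finset.mem_univ _))
      (Finset.le_sup (Finset.mem_univ _))

lemma dom_prodFin (VA : ValuationAlgebra Φ D) :
    ∀ {n : ℕ} (f : Fin (n + 1) → Φ),
      VA.dom (prodFin VA f) = Finset.univ.sup (fun i => VA.dom (f i)) := by
  intro n
  induction n with
  | zero =>
      intro f
      simp [prodFin]
  | succ m ih =>
      intro f
      rw [prodFin_succ, VA.dom_comb, ih, sup_univ_last fun i => VA.dom (f i)]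

end Aux

/-- piecewise extensibility extends to finite products.  Let `ℰ`
be a piecewise extensible family of configuration extension sets, `φᵢ`
(`i = 0,…,n`) valuations with domains `dᵢ`, `φ = ∏ᵢ φᵢ`, `rᵢ = dᵢ ⊓ ⨆_{j≠i} dⱼ`,
and `t` with `⨆ᵢ dᵢ ≥ t ≥ ⨆ᵢ rᵢ`.  If `x ∈ Γ_t` and `z` is an extension of `x`
to each `φᵢ` (`z_{dᵢ} ∈ E_{φᵢ}(x_{t⊓dᵢ})`), then `z` is an extension of `x` to
`φ` (`z ∈ E_φ(x)`). -/
theorem piecewise_extension_nary {Φ D : Type*} [Lattice D] [OrderBot D]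
    {Γ : D → Type*} (VA : ValuationAlgebra Φ D) (CS : ConfigSystem D Γ)
    (F : ExtFamily VA CS) (hF : F.PiecewiseExtensible)
    (n : ℕ) (φs : Fin (n + 1) → Φ) (d : Fin (n + 1) → D)
    (hd : ∀ i, VA.dom (φs i) = d i)
    (t : D)
    (ht₁ : Finset.univ.sup (fun i => d i ⊓ (Finset.univ.erase i).sup d) ≤ t)
    (ht₂ : t ≤ Finset.univ.sup d)
    (x : Γ t) (z : Γ (Finset.univ.sup d))
    (hz : ∀ i, CS.cproj (Finset.le_sup (Finset.mem_univ i)) z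
            ∈ F.E (φs i) (hd i) inf_le_right (CS.cproj inf_le_left x))
    (hP : VA.dom (prodFin VA φs) = Finset.univ.sup d) :
    z ∈ F.E (prodFin VA φs) hP ht₂ x := by
  induction n generalizing t with
  | zero =>
      have eq0 : prodFin VA φs = φs 0 := by simp [prodFin]
      have e0 : d 0 = Finset.univ.sup d :=
        (hd 0).symm.trans ((congrArg VA.dom eq0).symm.trans hP)
      have es : t ⊓ d 0 = t := inf_eq_left.mpr (ht₂.trans e0.ge)
      exact E_mem_congr F eq0.symm es e0 (hd 0) hP _ _
        (cproj_heq_self CS es _ x) (cproj_heq_self CS e0 _ z) (hz 0)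
  | succ m ih =>
      -- notation
      have hDle : Finset.univ.sup (fun i : Fin (m+1) => d i.castSucc)
          ≤ Finset.univ.sup d :=
        Finset.sup_le fun i _ => Finset.le_sup (Finset.mem_univ _)
      have eqsup : Finset.univ.sup (fun i : Fin (m+1) => d i.castSucc)
          ⊔ d (Fin.last (m+1)) = Finset.univ.sup d := (sup_univ_last d).symm
      have hP' : VA.dom (prodFin VA (fun i : Fin (m+1) => φs i.castSucc))
          = Finset.univ.sup (fun i : Fin (m+1) => d i.castSucc) := by
        rw [dom_prodFin]; exact Finset.sup_congr rfl fun i _ => hd _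
      have hr_le_t : ∀ i : Fin (m+2), d i ⊓ (Finset.univ.erase i).sup d ≤ t :=
        fun i => le_trans (Finset.le_sup (f := fun i => d i ⊓ (Finset.univ.erase i).sup d) (Finset.mem_univ i)) ht₁
      have herase : ∀ i : Fin (m+1),
          (Finset.univ.erase i).sup (fun j : Fin (m+1) => d j.castSucc)
            ≤ (Finset.univ.erase i.castSucc).sup d := by
        intro i
        refine Finset.sup_le fun j hj => Finset.le_sup ?_
        simp only [Finset.mem_erase, Finset.mem_univ, and_true] at hj ⊢
        exact fun h => hj (Fin.castSucc_injective _ h)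
      have ht₁' : Finset.univ.sup (fun i : Fin (m+1) =>
            d i.castSucc ⊓ (Finset.univ.erase i).sup (fun j : Fin (m+1) => d j.castSucc))
          ≤ t ⊓ Finset.univ.sup (fun i : Fin (m+1) => d i.castSucc) := by
        refine Finset.sup_le fun i _ => le_inf ?_
          (le_trans inf_le_left (Finset.le_sup (f := fun i : Fin (m+1) => d i.castSucc) (Finset.mem_univ i)))
        exact le_trans (inf_le_inf_left _ (herase i)) (hr_le_t i.castSucc)
      -- transported hypotheses for the first m+1 valuations
      have hz' : ∀ i : Fin (m+1),
          CS.cproj (Finset.le_sup (Finset.mem_univ i)) (CS.cproj hDle z)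
            ∈ F.E (φs i.castSucc) (hd i.castSucc) inf_le_right
                (CS.cproj inf_le_left
                  (CS.cproj (inf_le_left :
                    t ⊓ Finset.univ.sup (fun i : Fin (m+1) => d i.castSucc) ≤ t) x)) := by
        intro i
        have hle : d i.castSucc ≤ Finset.univ.sup (fun i : Fin (m+1) => d i.castSucc) :=
          Finset.le_sup (f := fun i : Fin (m+1) => d i.castSucc) (Finset.mem_univ i)
        have es : t ⊓ d i.castSucc
            = t ⊓ Finset.univ.sup (fun i : Fin (m+1) => d i.castSucc) ⊓ d i.castSucc := by
          rw [inf_assoc, inf_eq_right.mpr hle]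
        exact E_mem_congr F rfl es rfl (hd i.castSucc) (hd i.castSucc) _ _
          (HEq.symm (cproj_cproj_heq CS es inf_le_left inf_le_left inf_le_left x))
          (HEq.symm (cproj_cproj_heq CS rfl (Finset.le_sup (Finset.mem_univ i)) hDle
            (Finset.le_sup (Finset.mem_univ i.castSucc)) z))
          (hz i.castSucc)
      have key := ih (fun i => φs i.castSucc) (fun i => d i.castSucc)
        (fun i => hd i.castSucc)
        (t ⊓ Finset.univ.sup (fun i : Fin (m+1) => d i.castSucc)) ht₁' inf_le_right
        (CS.cproj inf_le_left x) (CS.cproj hDle z) hz' hP'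
      -- pairwise extensibility for (product of first m+1, last)
      have hD₁erase : Finset.univ.sup (fun i : Fin (m+1) => d i.castSucc)
          ≤ (Finset.univ.erase (Fin.last (m+1))).sup d := by
        refine Finset.sup_le fun i _ => Finset.le_sup ?_
        simp only [Finset.mem_erase, Finset.mem_univ, and_true]
        exact (Fin.castSucc_lt_last i).ne
      have hmeet : Finset.univ.sup (fun i : Fin (m+1) => d i.castSucc)
          ⊓ d (Fin.last (m+1)) ≤ t :=
        le_trans (le_inf inf_le_right (le_trans inf_le_left hD₁erase))
          (hr_le_t (Fin.last (m+1)))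
      have hpair := hF (prodFin VA (fun i : Fin (m+1) => φs i.castSucc))
        (φs (Fin.last (m+1))) _ _ hP' (hd (Fin.last (m+1))) t hmeet
        (ht₂.trans eqsup.ge) x (CS.cproj eqsup.le z)
        (by rw [CS.cproj_comp]; exact key)
        (by rw [CS.cproj_comp]; exact hz (Fin.last (m+1)))
      exact E_mem_congr F (prodFin_succ VA φs).symm rfl eqsup _ hP _ ht₂
        HEq.rfl (cproj_heq_self CS eqsup _ z) hpair
end

section
/- Binary solution-extension lemma: let ℰ be a piecewise extensible family of configuration extension sets, φ₁, φ₂ valuations with domains d₁, d₂, and φ = φ₁ × φ₂. If x ∈ c_{φ^{↓d₁}}, y is an extension of x to φ₂ (y ∈ E_{φ₂}(x_{d₁∧d₂})), and z ∈ Γ_{d₁∨d₂} is a merger of x and y (z_{d₁} = x and z_{d₂} = y), then z ∈ c_φ. -/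
/-- Auxiliary: a configuration extends any of its own projections to `φ` when
the projection scope in fact equals `d(φ)`. -/
lemma mem_E_self_of_eq {Φ D : Type*} [Lattice D] [OrderBot D] {Γ : D → Type*}
    {VA : ValuationAlgebra Φ D} {CS : ConfigSystem D Γ} (F : ExtFamily VA CS)
    (φ : Φ) {s d : D} (hd : VA.dom φ = d) (hs : s = d)
    (h1 h2 : s ≤ d) (x : Γ d) :
    x ∈ F.E φ hd h2 (CS.cproj h1 x) := by
  subst hs
  have : CS.cproj h1 x = x := CS.cproj_refl x
  rw [this, F.self_ext φ _ hd x]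
  rfl

/-- binary solution-extension lemma.  Let `ℰ` be piecewise
extensible, `φ = φ₁ × φ₂` with domains `d₁, d₂`.  If `x ∈ c_{φ^{↓d₁}}`, `y` is
an extension of `x` to `φ₂` (`y ∈ E_{φ₂}(x_{d₁⊓d₂})`), and `z` is a merger of
`x` and `y` (`z_{d₁} = x`, `z_{d₂} = y`), then `z ∈ c_φ`. -/
theorem binary_solution_extension {Φ D : Type*} [Lattice D] [OrderBot D]
    {Γ : D → Type*} (VA : ValuationAlgebra Φ D) (CS : ConfigSystem D Γ)
    (F : ExtFamily VA CS) (hF : F.PiecewiseExtensible)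
    (φ₁ φ₂ : Φ) (d₁ d₂ : D) (h₁ : VA.dom φ₁ = d₁) (h₂ : VA.dom φ₂ = d₂)
    (x : Γ d₁) (y : Γ d₂) (z : Γ (d₁ ⊔ d₂))
    (hx : x ∈ F.sol (VA.proj (VA.comb φ₁ φ₂) d₁)
            (VA.dom_proj (VA.comb φ₁ φ₂) d₁
              (by rw [VA.dom_comb, h₁, h₂]; exact le_sup_left)))
    (hy : y ∈ F.E φ₂ h₂ inf_le_right (CS.cproj inf_le_left x))
    (hz₁ : CS.cproj le_sup_left z = x) (hz₂ : CS.cproj le_sup_right z = y) :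
    z ∈ F.sol (VA.comb φ₁ φ₂)
          (show VA.dom (VA.comb φ₁ φ₂) = d₁ ⊔ d₂ by rw [VA.dom_comb, h₁, h₂]) := by
  set φ := VA.comb φ₁ φ₂ with hφ
  have hd : VA.dom φ = d₁ ⊔ d₂ := by rw [hφ, VA.dom_comb, h₁, h₂]
  -- step: z extends x to φ
  have hstep : z ∈ F.E φ hd le_sup_left x := by
    apply hF φ₁ φ₂ d₁ d₂ h₁ h₂ d₁ inf_le_left le_sup_left x z
    · rw [hz₁]
      exact mem_E_self_of_eq F φ₁ h₁ (inf_idem d₁) _ _ x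
    · rw [hz₂]
      exact hy
  rw [F.sol_eq]
  by_cases hbot : (⊥ : D) = d₁
  · subst hbot
    have hx' : x = CS.diamond := CS.diamond_unique x
    rw [hx'] at hstep
    exact hstep
  · have := F.two_step φ (d₁ ⊔ d₂) hd ⊥ d₁ bot_le hbot le_sup_left CS.diamond
    rw [show (bot_le.trans le_sup_left : (⊥:D) ≤ d₁ ⊔ d₂) = bot_le from rfl] at this
    rw [this]
    constructor
    · rw [hz₁]
      rw [F.sol_eq] at hx
      exact hx
    · rw [hz₁]
      exact hstep
end

section
/- For the max-plus valuation algebra of real functions, the extension sets E_φ(x) = { z ∈ Ω_{d(φ)} : z↓X = x and φ(z) = φ^{↓X}(x) } satisfy the two-step decomposition property: for X ⊆ Y ⊆ d(φ) and x ∈ Ω_X, E_φ(x) = { z ∈ Ω_{d(φ)} : z↓Y ∈ E_{φ^{↓Y}}(x) and z ∈ E_φ(z↓Y) }. -/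
open Classical

variable {V : Type*} [DecidableEq V]

/-- The max-plus configuration extension set
`E_φ(x) = { z ∈ Ω_D : z↓X = x and φ(z) = φ^{↓X}(x) }`. -/
noncomputable def ExtSet {V : Type*} [DecidableEq V] {Ω : V → Type*} [∀ v, Fintype (Ω v)]
    [∀ v, Nonempty (Ω v)] [∀ v, DecidableEq (Ω v)] {X D : Finset V}
    (φ : Cfg Ω D → ℝ) (h : X ⊆ D) (x : Cfg Ω X) : Set (Cfg Ω D) :=
  {z | restrict h z = x ∧ φ z = projv φ h x}

theorem restrict_restrict {Ω : V → Type*} {X Y D : Finset V} (hXY : X ⊆ Y) (hYD : Y ⊆ D)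
    (z : Cfg Ω D) : restrict hXY (restrict hYD z) = restrict (hXY.trans hYD) z := rfl

theorem le_projv {Ω : V → Type*} [∀ v, Fintype (Ω v)] [∀ v, Nonempty (Ω v)]
    [∀ v, DecidableEq (Ω v)] {X D : Finset V} (φ : Cfg Ω D → ℝ) (h : X ⊆ D)
    (z : Cfg Ω D) : φ z ≤ projv φ h (restrict h z) := by
  unfold projv
  exact Finset.le_sup' φ (by simp)

theorem projv_attained {Ω : V → Type*} [∀ v, Fintype (Ω v)] [∀ v, Nonempty (Ω v)]
    [∀ v, DecidableEq (Ω v)] {X D : Finset V} (φ : Cfg Ω D → ℝ) (h : X ⊆ D)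
    (x : Cfg Ω X) : ∃ z : Cfg Ω D, restrict h z = x ∧ projv φ h x = φ z := by
  obtain ⟨z, hz, hz2⟩ := Finset.exists_mem_eq_sup'
    (⟨extendCfg h x, Finset.mem_filter.mpr ⟨Finset.mem_univ _, restrict_extendCfg h x⟩⟩ :
      (Finset.univ.filter fun z : Cfg Ω D => restrict h z = x).Nonempty) φ
  exact ⟨z, (Finset.mem_filter.mp hz).2, hz2⟩

theorem projv_projv {Ω : V → Type*} [∀ v, Fintype (Ω v)] [∀ v, Nonempty (Ω v)]
    [∀ v, DecidableEq (Ω v)] {X Y D : Finset V} (φ : Cfg Ω D → ℝ) (hXY : X ⊆ Y)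
    (hYD : Y ⊆ D) (x : Cfg Ω X) :
    projv (projv φ hYD) hXY x = projv φ (hXY.trans hYD) x := by
  apply le_antisymm
  · apply Finset.sup'_le
    intro y hy
    obtain ⟨z, hz1, hz2⟩ := projv_attained φ hYD y
    rw [hz2]
    have hx : restrict (hXY.trans hYD) z = x := by
      rw [← restrict_restrict hXY hYD, hz1]; exact (Finset.mem_filter.mp hy).2
    calc φ z ≤ projv φ (hXY.trans hYD) (restrict (hXY.trans hYD) z) :=
          le_projv φ _ z
      _ = _ := by rw [hx]
  · apply Finset.sup'_le
    intro z hz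
    have hx : restrict hXY (restrict hYD z) = x := by
      rw [restrict_restrict]; exact (Finset.mem_filter.mp hz).2
    calc φ z ≤ projv φ hYD (restrict hYD z) := le_projv φ hYD z
      _ ≤ projv (projv φ hYD) hXY (restrict hXY (restrict hYD z)) :=
          le_projv (projv φ hYD) hXY _
      _ = _ := by rw [hx]

/-- for the max-plus valuation algebra of real functions, the
extension sets satisfy the two-step decomposition property: for
`X ⊆ Y ⊆ d(φ)` and `x ∈ Ω_X`,
`E_φ(x) = { z : z↓Y ∈ E_{φ^{↓Y}}(x) and z ∈ E_φ(z↓Y) }`. -/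
theorem maxplus_two_step_decomposition
    {V : Type*} [DecidableEq V] {Ω : V → Type*} [∀ v, Fintype (Ω v)]
    [∀ v, Nonempty (Ω v)] [∀ v, DecidableEq (Ω v)] {X Y D : Finset V}
    (φ : Cfg Ω D → ℝ) (hXY : X ⊆ Y) (hYD : Y ⊆ D) (x : Cfg Ω X) :
    ExtSet φ (hXY.trans hYD) x
      = {z : Cfg Ω D | restrict hYD z ∈ ExtSet (projv φ hYD) hXY x
          ∧ z ∈ ExtSet φ hYD (restrict hYD z)} := by
  ext z
  simp only [ExtSet, Set.mem_setOf_eq, restrict_restrict, projv_projv, true_and]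
  constructor
  · rintro ⟨h1, h2⟩
    have hle1 : φ z ≤ projv φ hYD (restrict hYD z) := le_projv φ hYD z
    have hle2 : projv φ hYD (restrict hYD z) ≤ projv φ (hXY.trans hYD) x := by
      obtain ⟨w, hw1, hw2⟩ := projv_attained φ hYD (restrict hYD z)
      rw [hw2]
      have : restrict (hXY.trans hYD) w = x := by
        rw [← restrict_restrict hXY hYD, hw1, restrict_restrict, h1]
      calc φ w ≤ projv φ (hXY.trans hYD) (restrict (hXY.trans hYD) w) := le_projv φ _ w
        _ = _ := by rw [this]
    have heq : projv φ hYD (restrict hYD z) = projv φ (hXY.trans hYD) x :=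
      le_antisymm hle2 (h2 ▸ hle1)
    exact ⟨⟨h1, heq⟩, by rw [h2, ← heq]⟩
  · rintro ⟨⟨h1, h2⟩, h3⟩
    exact ⟨h1, by rw [h3, h2]⟩
end

section
/- In a join tree, for any node i the label intersection with the rest of the tree is bounded by the separator: if 𝒯_i is the subtree rooted at i in a rooted join tree, then (⋁_{j ∈ 𝒯_i} λ(j)) ∧ (⋁_{j ∉ 𝒯_i} λ(j)) ≤ λ(i) ∧ λ(p(i)) = s_i. -/
open Classical

/-- `Anc p a k`: `k` is an ancestor of `a` (including `a` itself) for the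
parent function `p` of a rooted tree. -/
def Anc {n : ℕ} (p : Fin (n + 1) → Fin (n + 1)) (a k : Fin (n + 1)) : Prop :=
  ∃ m : ℕ, p^[m] a = k

/-- `OnPath p a b k`: `k` lies on the unique path between `a` and `b` in the
rooted tree with parent function `p`. -/
def OnPath {n : ℕ} (p : Fin (n + 1) → Fin (n + 1)) (a b k : Fin (n + 1)) : Prop :=
  (Anc p a k ∨ Anc p b k) ∧ ∀ c, Anc p a c → Anc p b c → Anc p k c

lemma anc_trans {n : ℕ} {p : Fin (n + 1) → Fin (n + 1)} {a b c : Fin (n + 1)}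
    (h1 : Anc p a b) (h2 : Anc p b c) : Anc p a c := by
  obtain ⟨m, hm⟩ := h1
  obtain ⟨k, hk⟩ := h2
  exact ⟨k + m, by rw [Function.iterate_add_apply, hm, hk]⟩

lemma anc_comparable {n : ℕ} {p : Fin (n + 1) → Fin (n + 1)} {a i c : Fin (n + 1)}
    (h1 : Anc p a i) (h2 : Anc p a c) : Anc p i c ∨ Anc p c i := by
  obtain ⟨m0, hm0⟩ := h1
  obtain ⟨m1, hm1⟩ := h2
  rcases le_total m0 m1 with h | h
  · left
    refine ⟨m1 - m0, ?_⟩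
    rw [← hm0, ← Function.iterate_add_apply, Nat.sub_add_cancel h, hm1]
  · right
    refine ⟨m0 - m1, ?_⟩
    rw [← hm1, ← Function.iterate_add_apply, Nat.sub_add_cancel h, hm0]

/-- in a rooted join tree (labels in a distributive lattice,
running intersection property), for any non-root node `i` the label of the
subtree `𝒯ᵢ` meets the label of the rest of the tree below the separator:
`(⨆_{j ∈ 𝒯ᵢ} λ(j)) ⊓ (⨆_{j ∉ 𝒯ᵢ} λ(j)) ≤ λ(i) ⊓ λ(p(i)) = sᵢ`. -/
theorem subtree_separator_bound {D : Type*} [DistribLattice D] [OrderBot D]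
    (n : ℕ) (lam : Fin (n + 1) → D) (p : Fin (n + 1) → Fin (n + 1))
    (hroot : p (Fin.last n) = Fin.last n)
    (hp : ∀ i, i ≠ Fin.last n → i < p i)
    (hri : ∀ a b k, OnPath p a b k → lam a ⊓ lam b ≤ lam k)
    (i : Fin (n + 1)) (hi : i ≠ Fin.last n) :
    ((Finset.univ.filter fun j => Anc p j i).sup lam)
        ⊓ ((Finset.univ.filter fun j => ¬ Anc p j i).sup lam)
      ≤ lam i ⊓ lam (p i) := by
  rw [Finset.sup_inf_sup]
  refine Finset.sup_le ?_
  rintro ⟨a, b⟩ hab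
  simp only [Finset.mem_product, Finset.mem_filter, Finset.mem_univ, true_and] at hab
  obtain ⟨ha, hb⟩ := hab
  -- key facts
  have key : ∀ c, Anc p a c → Anc p b c → Anc p i c ∧ c ≠ i := by
    intro c hac hbc
    rcases anc_comparable ha hac with h | h
    · refine ⟨h, ?_⟩
      rintro rfl
      exact hb hbc
    · exact absurd (anc_trans hbc h) hb
  refine le_inf ?_ ?_
  · exact hri a b i ⟨Or.inl ha, fun c hac hbc => (key c hac hbc).1⟩
  · refine hri a b (p i) ⟨Or.inl ?_, ?_⟩
    · obtain ⟨m, hm⟩ := ha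
      exact ⟨m + 1, by rw [Function.iterate_succ_apply', hm]⟩
    · intro c hac hbc
      obtain ⟨⟨k, hk⟩, hne⟩ := key c hac hbc
      cases k with
      | zero => exact (hne (by simpa using hk.symm)).elim
      | succ k' => exact ⟨k', by rw [← Function.iterate_succ_apply, hk]⟩
end

section
/- The extension-set definition W_φ(x) = { y : φ(x,y) = φ^{↓X}(x) } in the Boolean max algebra fails Pouly–Kohlas condition for general X, Y not nested: there exist a Boolean valuation φ on two binary variables and sets X, Y with X ⊄ Y and Y ⊄ X such that c_φ^{↓X∪Y} ≠ { z ∈ Ω_{X∪Y} : z↓Y ∈ c_φ^{↓Y} and z↓(X−Y) ∈ W_{φ^{↓X}}(z↓(X∩Y)) }. -/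
open Classical

variable {V : Type*} [DecidableEq V]

/-- in the Boolean max algebra there exist a Boolean valuation
`φ` on two binary variables (with domain `X ∪ Y`) and sets `X ⊄ Y`, `Y ⊄ X`
such that `c_φ^{↓X∪Y}` differs from
`{ z : z↓Y ∈ c_φ^{↓Y} and z↓(X−Y) ∈ W_{φ^{↓X}}(z↓(X∩Y)) }`, the latter
membership condition being expressed as
`φ^{↓X}(z↓X) = (φ^{↓X})^{↓X∩Y}(z↓(X∩Y))`. -/
theorem pouly_kohlas_condition_fails :
    ∃ (X Y : Finset (Fin 2)) (φ : Cfg (fun _ : Fin 2 => Bool) (X ∪ Y) → ℝ),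
      (∀ z, φ z = 0 ∨ φ z = 1) ∧ ¬ X ⊆ Y ∧ ¬ Y ⊆ X ∧
      (restrict (Finset.Subset.refl (X ∪ Y)) ''
          {z | φ z = projv φ (Finset.empty_subset _) emptyCfg}
        ≠ {z | restrict (Finset.subset_union_right : Y ⊆ X ∪ Y) z
                  ∈ restrict (Finset.subset_union_right : Y ⊆ X ∪ Y) ''
                      {w | φ w = projv φ (Finset.empty_subset _) emptyCfg}
            ∧ projv φ Finset.subset_union_left (restrict Finset.subset_union_left z)
                = projv (projv φ (Finset.subset_union_left : X ⊆ X ∪ Y))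
                    (Finset.inter_subset_left : X ∩ Y ⊆ X)
                    (restrict ((Finset.inter_subset_left).trans Finset.subset_union_left) z)}) := by
  classical
  set X : Finset (Fin 2) := {0} with hX
  set Y : Finset (Fin 2) := {1} with hY
  have h0 : (0 : Fin 2) ∈ X ∪ Y := by decide
  have h1 : (1 : Fin 2) ∈ X ∪ Y := by decide
  set φ : Cfg (fun _ : Fin 2 => Bool) (X ∪ Y) → ℝ :=
    fun z => if z ⟨0, h0⟩ = z ⟨1, h1⟩ then 1 else 0 with hφ
  refine ⟨X, Y, φ, ?_, by decide, by decide, ?_⟩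
  · intro z
    by_cases h : z ⟨0, h0⟩ = z ⟨1, h1⟩ <;> simp [hφ, h]
  -- the witness configuration z0 = (x ↦ 0, y ↦ 1)
  set z0 : Cfg (fun _ : Fin 2 => Bool) (X ∪ Y) := fun v => decide (v.1 = 1) with hz0
  have φle : ∀ z, φ z ≤ 1 := by
    intro z; by_cases h : z ⟨0, h0⟩ = z ⟨1, h1⟩ <;> simp [hφ, h]
  have key : ∀ {S : Finset (Fin 2)} (h : S ⊆ X ∪ Y) (x : Cfg (fun _ : Fin 2 => Bool) S)
      (w : Cfg (fun _ : Fin 2 => Bool) (X ∪ Y)),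
      restrict h w = x → φ w = 1 → projv φ h x = 1 := by
    intro S h x w hw hφw
    apply le_antisymm
    · exact Finset.sup'_le _ _ fun z _ => φle z
    · exact hφw ▸ Finset.le_sup' φ (Finset.mem_filter.mpr ⟨Finset.mem_univ _, hw⟩)
  have proj_empty : projv φ (Finset.empty_subset _) emptyCfg = 1 := by
    refine key _ _ (fun _ => true) ?_ ?_
    · funext v; exact absurd v.2 (Finset.notMem_empty v.1)
    · simp [hφ]
  have φz0 : φ z0 = 0 := by
    have : z0 ⟨0, h0⟩ ≠ z0 ⟨1, h1⟩ := by simp [hz0]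
    simp [hφ, this]
  have projX : projv φ (Finset.subset_union_left : X ⊆ X ∪ Y)
      (restrict Finset.subset_union_left z0) = 1 := by
    refine key _ _ (fun _ => false) ?_ ?_
    · funext v
      rcases v with ⟨v, hv⟩
      have : v = 0 := by simpa [hX] using hv
      subst this
      simp [restrict, hz0]
    · simp [hφ]
  -- X ∩ Y is empty
  have hXYe : ∀ (v : Fin 2), v ∉ X ∩ Y := by decide
  have projXY : projv (projv φ (Finset.subset_union_left : X ⊆ X ∪ Y))
      (Finset.inter_subset_left : X ∩ Y ⊆ X)
      (restrict ((Finset.inter_subset_left).trans Finset.subset_union_left) z0) = 1 := by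
    apply le_antisymm
    · apply Finset.sup'_le
      intro x _
      exact Finset.sup'_le _ _ fun z _ => φle z
    · refine le_trans (le_of_eq projX.symm)
        (Finset.le_sup' _ (Finset.mem_filter.mpr ⟨Finset.mem_univ _, ?_⟩))
      funext v; exact absurd v.2 (hXYe v.1)
  intro heq
  have hmem : z0 ∈ {z | restrict (Finset.subset_union_right : Y ⊆ X ∪ Y) z
                  ∈ restrict (Finset.subset_union_right : Y ⊆ X ∪ Y) ''
                      {w | φ w = projv φ (Finset.empty_subset _) emptyCfg}
            ∧ projv φ Finset.subset_union_left (restrict Finset.subset_union_left z)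
                = projv (projv φ (Finset.subset_union_left : X ⊆ X ∪ Y))
                    (Finset.inter_subset_left : X ∩ Y ⊆ X)
                    (restrict ((Finset.inter_subset_left).trans Finset.subset_union_left) z)} := by
    constructor
    · refine ⟨fun _ => true, ?_, ?_⟩
      · simp only [Set.mem_setOf_eq, proj_empty]; simp [hφ]
      · funext v
        rcases v with ⟨v, hv⟩
        have : v = 1 := by simpa [hY] using hv
        subst this
        simp [restrict, hz0]
    · rw [projX, projXY]
  rw [← heq] at hmem
  obtain ⟨w, hw, hwz⟩ := hmem
  have hwid : restrict (Finset.Subset.refl (X ∪ Y)) w = w := rfl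
  rw [hwid] at hwz
  rw [hwz] at hw
  simp only [Set.mem_setOf_eq, φz0, proj_empty] at hw
  norm_num at hw
end
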